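/- If f : ℕ → ℤ is a linear recurrence sequence in ℚ (i.e., f takes integer values and satisfies a linear recurrence with rational coefficients whose lowest coefficient is nonzero), then f is a linear recurrence sequence in ℤ. In fact, the shortest recurrence for f in ℚ has all its coefficients in ℤ. -/

import Mathlib

open Polynomial PowerSeries

lemma fatou_descent (p : ℕ) (hp : p.Prime) (Q : Polynomial ℤ)
    (hQ0 : (p : ℤ) ∣ Q.coeff 0) (i₀ : ℕ) (hi₀ : ¬ (p : ℤ) ∣ Q.coeff i₀) :
    ∀ N : ℕ, ∀ d : ℤ, d.natAbs ≤ N → d ≠ 0 →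
      ∀ H : PowerSeries ℤ, (Q : PowerSeries ℤ) * H = PowerSeries.C d → False := by
  haveI : Fact p.Prime := ⟨hp⟩
  intro N
  induction N with
  | zero =>
    intro d hd hd0 H _
    exact hd0 (by omega)
  | succ N ih =>
    intro d hd hd0 H hQH
    set ρ := Int.castRingHom (ZMod p) with hρ
    have hmap : ((Q.map ρ : Polynomial (ZMod p)) : PowerSeries (ZMod p))
        * PowerSeries.map ρ H = PowerSeries.C (ρ d) := by
      have h1 := congrArg (PowerSeries.map ρ) hQH
      rw [map_mul] at h1
      have h2 : PowerSeries.map ρ (Q : PowerSeries ℤ)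
          = ((Q.map ρ : Polynomial (ZMod p)) : PowerSeries (ZMod p)) := by
        ext n; simp [Polynomial.coeff_coe]
      have h3 : PowerSeries.map ρ (PowerSeries.C d) = PowerSeries.C (ρ d) := by
        ext n; simp [PowerSeries.coeff_C]
      rw [h2, h3] at h1; exact h1
    have hQbar_ne : (Q.map ρ : Polynomial (ZMod p)) ≠ 0 := by
      intro h
      apply hi₀
      have : (Q.map ρ).coeff i₀ = 0 := by rw [h]; simp
      rw [Polynomial.coeff_map] at this
      exact_mod_cast (ZMod.intCast_zmod_eq_zero_iff_dvd _ p).mp this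
    have hQbar0 : (Q.map ρ).coeff 0 = 0 := by
      rw [Polynomial.coeff_map]
      exact_mod_cast (ZMod.intCast_zmod_eq_zero_iff_dvd _ p).mpr hQ0
    have hd_dvd : (p : ℤ) ∣ d := by
      have h0 := congrArg (PowerSeries.constantCoeff) hmap
      rw [map_mul] at h0
      have : PowerSeries.constantCoeff ((Q.map ρ : Polynomial (ZMod p)) : PowerSeries (ZMod p)) = 0 := by
        rw [← PowerSeries.coeff_zero_eq_constantCoeff, Polynomial.coeff_coe, hQbar0]
      rw [this, zero_mul, PowerSeries.constantCoeff_C] at h0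
      exact (ZMod.intCast_zmod_eq_zero_iff_dvd _ p).mp (by exact_mod_cast h0.symm)
    -- then C (ρ d) = 0, so Q̄ * H̄ = 0, then H̄ = 0 by domain
    have hCd : PowerSeries.C (ρ d) = 0 := by
      have : (ρ d : ZMod p) = 0 := (ZMod.intCast_zmod_eq_zero_iff_dvd _ p).mpr hd_dvd
      rw [this, map_zero]
    rw [hCd] at hmap
    have hHbar : PowerSeries.map ρ H = 0 := by
      rcases mul_eq_zero.mp hmap with h | h
      · exact absurd ((Polynomial.coe_eq_zero_iff).mp h) hQbar_ne
      · exact h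
    -- all coefficients of H divisible by p
    have hdivH : ∀ n, (p : ℤ) ∣ PowerSeries.coeff n H := by
      intro n
      have : ρ (PowerSeries.coeff n H) = 0 := by
        have := congrArg (PowerSeries.coeff n) hHbar
        simpa using this
      exact (ZMod.intCast_zmod_eq_zero_iff_dvd _ p).mp (by exact_mod_cast this)
    obtain ⟨d', rfl⟩ := hd_dvd
    set H' : PowerSeries ℤ := PowerSeries.mk (fun n => PowerSeries.coeff n H / p) with hH'
    have hHeq : H = (PowerSeries.C (p : ℤ)) * H' := by
      ext n
      rw [PowerSeries.coeff_C_mul, hH', PowerSeries.coeff_mk]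
      exact (Int.ediv_mul_cancel (hdivH n)).symm ▸ (Int.mul_ediv_cancel' (hdivH n)).symm
    have hp0 : (PowerSeries.C (p : ℤ)) ≠ 0 := by
      intro h
      have := congrArg (PowerSeries.constantCoeff) h
      rw [PowerSeries.constantCoeff_C, map_zero] at this
      have := hp.two_le
      omega
    have key : (Q : PowerSeries ℤ) * H' = PowerSeries.C d' := by
      apply mul_left_cancel₀ hp0
      rw [← mul_assoc, mul_comm (PowerSeries.C (p:ℤ)) (Q : PowerSeries ℤ), mul_assoc, ← hHeq, hQH,
        ← map_mul]
    have hd'0 : d' ≠ 0 := by rintro rfl; simp at hd0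
    apply ih d' _ hd'0 H' key
    have hp2 : 2 ≤ p := hp.two_le
    have : d'.natAbs < ((p:ℤ) * d').natAbs := by
      rw [Int.natAbs_mul]
      have : (p:ℤ).natAbs = p := Int.natAbs_natCast p
      nlinarith [Int.natAbs_pos.mpr hd'0, this]
    omega

lemma key_coeff (f : ℕ → ℚ) (k : ℕ) (Q : Polynomial ℚ) (hdeg : ∀ j, k < j → Q.coeff j = 0)
    (n : ℕ) :
    PowerSeries.coeff (n + k) ((Q : PowerSeries ℚ) * PowerSeries.mk f)
      = Q.coeff 0 * f (n + k) + ∑ i ∈ Finset.range k, Q.coeff (k - i) * f (n + i) := by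
  rw [PowerSeries.coeff_mul, Finset.Nat.sum_antidiagonal_eq_sum_range_succ_mk]
  simp only [Polynomial.coeff_coe, PowerSeries.coeff_mk]
  have h1 : ∑ j ∈ Finset.range (n + k + 1), Q.coeff j * f (n + k - j)
      = ∑ j ∈ Finset.range (k + 1), Q.coeff j * f (n + k - j) := by
    rw [eq_comm]
    apply Finset.sum_subset
    · apply Finset.range_subset_range.mpr; omega
    · intro j hj hj2
      simp only [Finset.mem_range] at hj hj2
      simp [hdeg j (by omega)]
  rw [h1, Finset.sum_range_succ']
  rw [← Finset.sum_range_reflect (fun i => Q.coeff (k - i) * f (n + i)) k]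
  rw [add_comm]
  congr 1
  · apply Finset.sum_congr rfl
    intro j hj
    simp only [Finset.mem_range] at hj
    have e1 : k - (k - 1 - j) = j + 1 := by omega
    have e2 : n + k - (j + 1) = n + (k - 1 - j) := by omega
    rw [e1, e2]

noncomputable def recPoly (k : ℕ) (a : ℕ → ℚ) : Polynomial ℚ :=
  1 - ∑ j ∈ Finset.range k, Polynomial.C (a (k - 1 - j)) * Polynomial.X ^ (j + 1)

lemma recPoly_coeff (k : ℕ) (a : ℕ → ℚ) (t : ℕ) :
    (recPoly k a).coeff t = if t = 0 then 1 else if t ≤ k then -(a (k - t)) else 0 := by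
  unfold recPoly
  rw [Polynomial.coeff_sub, Polynomial.finset_sum_coeff]
  simp only [Polynomial.coeff_C_mul, Polynomial.coeff_X_pow]
  rcases Nat.eq_zero_or_pos t with rfl | ht
  · simp
  · rw [Polynomial.coeff_one]
    have h0 : ¬ t = 0 := by omega
    simp only [h0, if_false, if_neg h0]
    by_cases htk : t ≤ k
    · rw [if_pos htk]
      rw [Finset.sum_eq_single (t - 1)]
      · have e : t = t - 1 + 1 := by omega
        rw [if_pos e, mul_one]
        have : k - 1 - (t - 1) = k - t := by omega
        rw [this]; ring
      · intro j _ hj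
        have : ¬ (t = j + 1) := by omega
        rw [if_neg this, mul_zero]
      · intro h
        exfalso; apply h; simp only [Finset.mem_range]; omega
    · rw [if_neg htk]
      rw [Finset.sum_eq_zero, sub_zero]
      intro j hj
      simp only [Finset.mem_range] at hj
      have : ¬ (t = j + 1) := by omega
      rw [if_neg this, mul_zero]


lemma rec_of_poly (f : ℕ → ℚ) (k' : ℕ) (Q : Polynomial ℚ) (hQ0 : Q.coeff 0 = 1)
    (hdeg : ∀ j, k' < j → Q.coeff j = 0)
    (hvan : ∀ n, 1 ≤ n →
      PowerSeries.coeff (n + k') ((Q : PowerSeries ℚ) * PowerSeries.mk f) = 0) :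
    ∀ n, 1 ≤ n → f (n + k') = ∑ i ∈ Finset.range k', (-(Q.coeff (k' - i))) * f (n + i) := by
  intro n hn
  have h := hvan n hn
  rw [key_coeff f k' Q hdeg n, hQ0, one_mul] at h
  have : ∑ i ∈ Finset.range k', (-(Q.coeff (k' - i))) * f (n + i)
      = -∑ i ∈ Finset.range k', Q.coeff (k' - i) * f (n + i) := by
    rw [← Finset.sum_neg_distrib]
    apply Finset.sum_congr rfl
    intros; ring
  rw [this]; linarith

lemma poly_of_rec (f : ℕ → ℚ) (k : ℕ) (a : ℕ → ℚ)
    (hrec : ∀ n, 1 ≤ n → f (n + k) = ∑ i ∈ Finset.range k, a i * f (n + i)) :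
    ∀ m, k + 1 ≤ m →
      PowerSeries.coeff m ((recPoly k a : PowerSeries ℚ) * PowerSeries.mk f) = 0 := by
  intro m hm
  have hdeg : ∀ j, k < j → (recPoly k a).coeff j = 0 := by
    intro j hj
    rw [recPoly_coeff]
    have h1 : ¬ j = 0 := by omega
    have h2 : ¬ j ≤ k := by omega
    simp [h1, h2]
  obtain ⟨n, hn, rfl⟩ : ∃ n, 1 ≤ n ∧ m = n + k := ⟨m - k, by omega, by omega⟩
  rw [key_coeff f k _ hdeg n]
  have hc0 : (recPoly k a).coeff 0 = 1 := by rw [recPoly_coeff]; simp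
  have hci : ∀ i ∈ Finset.range k, (recPoly k a).coeff (k - i) * f (n + i)
      = -(a i * f (n + i)) := by
    intro i hi
    simp only [Finset.mem_range] at hi
    rw [recPoly_coeff]
    have h1 : ¬ (k - i) = 0 := by omega
    have h2 : k - i ≤ k := by omega
    have h3 : k - (k - i) = i := by omega
    simp only [h1, if_false, if_pos h2, h3]
    ring
  rw [Finset.sum_congr rfl hci, hc0, one_mul, hrec n hn]
  simp

lemma coeff_coe_mul {R : Type*} [CommSemiring R] (W : Polynomial R) (φ : PowerSeries R) (n : ℕ) :
    PowerSeries.coeff n ((W : PowerSeries R) * φ)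
      = ∑ j ∈ Finset.range (n + 1), W.coeff j * PowerSeries.coeff (n - j) φ := by
  rw [PowerSeries.coeff_mul, Finset.Nat.sum_antidiagonal_eq_sum_range_succ_mk]
  simp [Polynomial.coeff_coe]

lemma coeff_sum_C_X_pow {R : Type*} [CommSemiring R] (b : ℕ → R) (k t : ℕ) :
    (∑ j ∈ Finset.range (k + 1), Polynomial.C (b j) * Polynomial.X ^ j).coeff t
      = if t ≤ k then b t else 0 := by
  rw [Polynomial.finset_sum_coeff]
  simp only [Polynomial.coeff_C_mul, Polynomial.coeff_X_pow]
  by_cases h : t ≤ k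
  · rw [if_pos h, Finset.sum_eq_single t]
    · simp
    · intro j _ hj
      rw [if_neg (by omega : ¬ t = j), mul_zero]
    · intro hc; exfalso; apply hc; simp only [Finset.mem_range]; omega
  · rw [if_neg h, Finset.sum_eq_zero]
    intro j hj
    simp only [Finset.mem_range] at hj
    rw [if_neg (by omega : ¬ t = j), mul_zero]

def IntS : Subring ℚ := (Int.castRingHom ℚ).range

lemma mem_IntS {x : ℚ} : x ∈ IntS ↔ ∃ z : ℤ, (z : ℚ) = x := Iff.rfl

lemma intCast_mem_IntS (z : ℤ) : (z : ℚ) ∈ IntS := ⟨z, rfl⟩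

lemma natCast_mem_IntS (n : ℕ) : (n : ℚ) ∈ IntS := ⟨n, by simp⟩

lemma num_cast_of_mem_IntS {x : ℚ} (hx : x ∈ IntS) : (x.num : ℚ) = x := by
  obtain ⟨z, rfl⟩ := hx
  simp

lemma denom_clear (W : Polynomial ℚ) : ∃ N : ℕ, 0 < N ∧ ∀ j, ((N : ℚ) * W.coeff j) ∈ IntS := by
  refine ⟨∏ i ∈ Finset.range (W.natDegree + 1), (W.coeff i).den, ?_, ?_⟩
  · apply Finset.prod_pos; intro i _; exact (W.coeff i).pos
  · intro j
    by_cases hj : j ≤ W.natDegree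
    · have hmem : j ∈ Finset.range (W.natDegree + 1) := by simp only [Finset.mem_range]; omega
      rw [← Finset.prod_erase_mul _ _ hmem]
      push_cast
      rw [mul_assoc]
      apply IntS.mul_mem
      · apply Subring.prod_mem
        intro i _
        exact natCast_mem_IntS _
      · rw [mul_comm]
        rw [Rat.mul_den_eq_num]
        exact intCast_mem_IntS _
    · rw [Polynomial.coeff_eq_zero_of_natDegree_lt (by omega), mul_zero]
      exact IntS.zero_mem

/-- Fatou's lemma: If `f : ℕ → ℤ` satisfies a linear recurrence with rational
coefficients (with nonzero lowest coefficient, and where `k` is the minimal possible order of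
such a rational recurrence), then the coefficients of this shortest rational recurrence are
all integers; in particular `f` is a linear recurrence sequence in ℤ. -/
theorem stmt4 (f : ℕ → ℤ) (k : ℕ) (a : ℕ → ℚ) (ha : k = 0 ∨ a 0 ≠ 0)
    (hrec : ∀ n ≥ 1, (f (n + k) : ℚ) = ∑ i ∈ Finset.range k, a i * (f (n + i) : ℚ))
    (hmin : ∀ (k' : ℕ) (a' : ℕ → ℚ), (k' = 0 ∨ a' 0 ≠ 0) →
      (∀ n ≥ 1, (f (n + k') : ℚ) = ∑ i ∈ Finset.range k', a' i * (f (n + i) : ℚ)) →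
      k ≤ k') :
    (∀ i < k, ∃ b : ℤ, a i = (b : ℚ)) ∧
    ∃ (l : ℕ) (b : ℕ → ℤ), (l = 0 ∨ b 0 ≠ 0) ∧
      ∀ n ≥ 1, f (n + l) = ∑ i ∈ Finset.range l, b i * f (n + i) := by
  classical
  rcases Nat.eq_zero_or_pos k with hk0 | hkpos
  · subst hk0
    refine ⟨by intro i hi; omega, 0, fun _ => 0, Or.inl rfl, ?_⟩
    intro n hn
    simp only [Finset.range_zero, Finset.sum_empty]
    have := hrec n hn
    simp only [Finset.range_zero, Finset.sum_empty] at this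
    exact_mod_cast this
  have ha0 : a 0 ≠ 0 := ha.resolve_left (by omega)
  by_cases hzero : ∀ n, 1 ≤ n → f n = 0
  · exfalso
    have := hmin 0 (fun _ => 1) (Or.inl rfl) (by
      intro n hn
      simp only [Finset.range_zero, Finset.sum_empty]
      exact_mod_cast hzero n hn)
    omega
  push_neg at hzero
  obtain ⟨n₀, hn₀, hfn₀⟩ := hzero
  set g : ℕ → ℚ := fun n => (f n : ℚ) with hg
  have hrecg : ∀ n, 1 ≤ n → g (n + k) = ∑ i ∈ Finset.range k, a i * g (n + i) :=
    fun n hn => hrec n hn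
  set F : PowerSeries ℚ := PowerSeries.mk g with hF
  have hFne : F ≠ 0 := by
    intro h
    apply hfn₀
    have := congrArg (PowerSeries.coeff n₀) h
    rw [hF, PowerSeries.coeff_mk, map_zero] at this
    simp only [hg] at this
    exact_mod_cast this
  set Q := recPoly k a with hQdef
  have hQ0 : Q.coeff 0 = 1 := by rw [hQdef, recPoly_coeff]; simp
  have hQcoeff : ∀ t, 1 ≤ t → t ≤ k → Q.coeff t = -(a (k - t)) := by
    intro t h1 h2
    rw [hQdef, recPoly_coeff, if_neg (by omega), if_pos h2]
  have hdegQ : ∀ j, k < j → Q.coeff j = 0 := by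
    intro j hj
    rw [hQdef, recPoly_coeff, if_neg (by omega), if_neg (by omega)]
  have hQk : Q.coeff k = -(a 0) := by
    rw [hQcoeff k hkpos le_rfl]
    congr 2
    omega
  have hQne : Q ≠ 0 := by
    intro h
    rw [h, Polynomial.coeff_zero] at hQ0
    exact one_ne_zero hQ0.symm
  have hQnatDeg : Q.natDegree = k := by
    apply le_antisymm
    · exact Polynomial.natDegree_le_iff_coeff_eq_zero.mpr hdegQ
    · exact Polynomial.le_natDegree_of_ne_zero (hQk ▸ neg_ne_zero.mpr ha0)
  have hvan : ∀ m, k + 1 ≤ m →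
      PowerSeries.coeff m ((Q : PowerSeries ℚ) * F) = 0 := by
    rw [hQdef, hF]
    exact poly_of_rec g k a hrecg
  set P := PowerSeries.trunc (k + 1) ((Q : PowerSeries ℚ) * F) with hPdef
  have hP : (P : PowerSeries ℚ) = (Q : PowerSeries ℚ) * F := by
    ext m
    rw [Polynomial.coeff_coe, hPdef, PowerSeries.coeff_trunc]
    split
    · rfl
    · next h => exact (hvan m (by omega)).symm
  have hPdeg : P.natDegree ≤ k := by
    apply Polynomial.natDegree_le_iff_coeff_eq_zero.mpr
    intro m hm
    rw [hPdef, PowerSeries.coeff_trunc, if_neg (by omega)]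
  have hQcoe_ne : (Q : PowerSeries ℚ) ≠ 0 := fun h => hQne (Polynomial.coe_eq_zero_iff.mp h)
  have hPne : P ≠ 0 := by
    intro h
    rw [h] at hP
    simp only [Polynomial.coe_zero] at hP
    rcases mul_eq_zero.mp hP.symm with h' | h'
    · exact hQcoe_ne h'
    · exact hFne h'
  -- gcd has degree 0
  set G0 := EuclideanDomain.gcd P Q with hG0def
  have hG0ne : G0 ≠ 0 := by
    rw [hG0def]
    intro h
    exact hQne (EuclideanDomain.gcd_eq_zero_iff.mp h).2
  have hG0deg : G0.natDegree = 0 := by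
    by_contra hdg
    have hdg1 : 1 ≤ G0.natDegree := by omega
    obtain ⟨Q₂, hQ₂⟩ := EuclideanDomain.gcd_dvd_right P Q
    obtain ⟨P₂, hP₂⟩ := EuclideanDomain.gcd_dvd_left P Q
    rw [← hG0def] at hQ₂ hP₂
    have hQ₂ne : Q₂ ≠ 0 := by rintro rfl; rw [mul_zero] at hQ₂; exact hQne hQ₂
    have hP₂ne : P₂ ≠ 0 := by rintro rfl; rw [mul_zero] at hP₂; exact hPne hP₂
    have hu : G0.coeff 0 * Q₂.coeff 0 = 1 := by
      rw [← Polynomial.mul_coeff_zero, ← hQ₂, hQ0]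
    have huQ : Q₂.coeff 0 ≠ 0 := by
      intro h; rw [h, mul_zero] at hu; exact one_ne_zero hu.symm
    set u := Q₂.coeff 0 with hudef
    set Q₃ := Polynomial.C u⁻¹ * Q₂ with hQ₃def
    set P₃ := Polynomial.C u⁻¹ * P₂ with hP₃def
    have hQ₃0 : Q₃.coeff 0 = 1 := by
      rw [hQ₃def, Polynomial.coeff_C_mul, inv_mul_cancel₀ huQ]
    have hQ₂F : (Q₂ : PowerSeries ℚ) * F = (P₂ : PowerSeries ℚ) := by
      have h1 : (G0 : PowerSeries ℚ) * ((Q₂ : PowerSeries ℚ) * F)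
          = (G0 : PowerSeries ℚ) * (P₂ : PowerSeries ℚ) := by
        rw [← mul_assoc, ← Polynomial.coe_mul, ← hQ₂, ← Polynomial.coe_mul, ← hP₂, hP]
      have hG0coe : (G0 : PowerSeries ℚ) ≠ 0 := fun h => hG0ne (Polynomial.coe_eq_zero_iff.mp h)
      exact mul_left_cancel₀ hG0coe h1
    have hQ₃F : (Q₃ : PowerSeries ℚ) * F = (P₃ : PowerSeries ℚ) := by
      rw [hQ₃def, hP₃def, Polynomial.coe_mul, Polynomial.coe_mul, mul_assoc, hQ₂F]
    set k₂ := Q₂.natDegree with hk₂def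
    have hinv_ne : u⁻¹ ≠ 0 := inv_ne_zero huQ
    have hQ₃nd : Q₃.natDegree = k₂ := by rw [hQ₃def, Polynomial.natDegree_C_mul hinv_ne]
    have hkk : k = G0.natDegree + k₂ := by
      rw [← hQnatDeg, hQ₂, Polynomial.natDegree_mul hG0ne hQ₂ne]
    have hP₂deg : P₂.natDegree ≤ k₂ := by
      have : P.natDegree = G0.natDegree + P₂.natDegree := by
        rw [hP₂, Polynomial.natDegree_mul hG0ne hP₂ne]
      omega
    have hP₃deg : P₃.natDegree ≤ k₂ := by
      rw [hP₃def, Polynomial.natDegree_C_mul hinv_ne]; exact hP₂deg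
    have hdeg₃ : ∀ j, k₂ < j → Q₃.coeff j = 0 := by
      intro j hj
      apply Polynomial.coeff_eq_zero_of_natDegree_lt
      omega
    have hvan₃ : ∀ n, 1 ≤ n →
        PowerSeries.coeff (n + k₂) ((Q₃ : PowerSeries ℚ) * F) = 0 := by
      intro n hn
      rw [hQ₃F, Polynomial.coeff_coe]
      apply Polynomial.coeff_eq_zero_of_natDegree_lt
      omega
    have hrec₃ := rec_of_poly g k₂ Q₃ hQ₃0 hdeg₃ hvan₃
    have hQ₃ne : Q₃ ≠ 0 := by
      intro h; rw [h, Polynomial.coeff_zero] at hQ₃0; exact one_ne_zero hQ₃0.symm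
    have ha'0 : -(Q₃.coeff (k₂ - 0)) ≠ 0 := by
      rw [Nat.sub_zero]
      apply neg_ne_zero.mpr
      have := Polynomial.leadingCoeff_ne_zero.mpr hQ₃ne
      rw [Polynomial.leadingCoeff, hQ₃nd] at this
      exact this
    have := hmin k₂ (fun i => -(Q₃.coeff (k₂ - i))) (Or.inr ha'0) hrec₃
    omega
  -- Bezout
  obtain ⟨c0, hc0⟩ : ∃ c0, G0 = Polynomial.C c0 :=
    ⟨G0.coeff 0, Polynomial.eq_C_of_natDegree_eq_zero hG0deg⟩
  have hc0ne : c0 ≠ 0 := by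
    intro h; rw [h, map_zero] at hc0; exact hG0ne hc0
  have hbez : Polynomial.C c0 = P * EuclideanDomain.gcdA P Q + Q * EuclideanDomain.gcdB P Q := by
    rw [← hc0, hG0def]; exact EuclideanDomain.gcd_eq_gcd_ab P Q
  set U := Polynomial.C c0⁻¹ * EuclideanDomain.gcdA P Q with hUdef
  set V := Polynomial.C c0⁻¹ * EuclideanDomain.gcdB P Q with hVdef
  have hUV : P * U + Q * V = 1 := by
    rw [hUdef, hVdef]
    have : P * (Polynomial.C c0⁻¹ * EuclideanDomain.gcdA P Q)
        + Q * (Polynomial.C c0⁻¹ * EuclideanDomain.gcdB P Q)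
        = Polynomial.C c0⁻¹ * (P * EuclideanDomain.gcdA P Q + Q * EuclideanDomain.gcdB P Q) := by
      ring
    rw [this, ← hbez, ← Polynomial.C_mul, inv_mul_cancel₀ hc0ne, Polynomial.C_1]
  set G : PowerSeries ℚ := (U : PowerSeries ℚ) * F + (V : PowerSeries ℚ) with hGdef
  have hQG : (Q : PowerSeries ℚ) * G = 1 := by
    rw [hGdef, mul_add]
    have h1 : (Q : PowerSeries ℚ) * ((U : PowerSeries ℚ) * F)
        = (P : PowerSeries ℚ) * (U : PowerSeries ℚ) := by
      rw [hP]; ring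
    rw [h1, ← Polynomial.coe_mul, ← Polynomial.coe_mul, ← Polynomial.coe_add, hUV,
      Polynomial.coe_one]
  -- clear denominators
  obtain ⟨N₁, hN₁pos, hN₁⟩ := denom_clear U
  obtain ⟨N₂, hN₂pos, hN₂⟩ := denom_clear V
  set N := N₁ * N₂ with hNdef
  have hNpos : 0 < N := Nat.mul_pos hN₁pos hN₂pos
  have hNU : ∀ j, ((N : ℚ) * U.coeff j) ∈ IntS := by
    intro j
    rw [hNdef]
    push_cast
    rw [mul_comm (N₁ : ℚ) (N₂ : ℚ), mul_assoc]
    exact IntS.mul_mem (natCast_mem_IntS _) (hN₁ j)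
  have hNV : ∀ j, ((N : ℚ) * V.coeff j) ∈ IntS := by
    intro j
    rw [hNdef]
    push_cast
    rw [mul_assoc]
    exact IntS.mul_mem (natCast_mem_IntS _) (hN₂ j)
  have hNG : ∀ n, ((N : ℚ) * PowerSeries.coeff n G) ∈ IntS := by
    intro n
    rw [hGdef, map_add, coeff_coe_mul, Polynomial.coeff_coe, mul_add, Finset.mul_sum]
    apply IntS.add_mem
    · apply Subring.sum_mem
      intro j _
      rw [← mul_assoc]
      apply IntS.mul_mem (hNU j)
      rw [hF, PowerSeries.coeff_mk, hg]
      exact intCast_mem_IntS _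
    · exact hNV n
  -- minimal denominator of Q
  have hcex : ∃ c : ℕ, 0 < c ∧ ∀ j, ((c : ℚ) * Q.coeff j) ∈ IntS := denom_clear Q
  set c := Nat.find hcex with hcdef
  obtain ⟨hcpos, hc⟩ := Nat.find_spec hcex
  set zfun : ℕ → ℤ := fun j => ((c : ℚ) * Q.coeff j).num with hzdef
  have hz : ∀ j, ((zfun j : ℤ) : ℚ) = (c : ℚ) * Q.coeff j := by
    intro j
    rw [hzdef]
    exact num_cast_of_mem_IntS (hc j)
  set Q₁ : Polynomial ℤ := ∑ j ∈ Finset.range (k + 1), Polynomial.C (zfun j) * Polynomial.X ^ j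
    with hQ₁def
  have hQ₁ : ∀ j, ((Q₁.coeff j : ℤ) : ℚ) = (c : ℚ) * Q.coeff j := by
    intro j
    rw [hQ₁def, coeff_sum_C_X_pow]
    split
    · exact hz j
    · next h =>
      rw [hdegQ j (by omega), mul_zero, Int.cast_zero]
  set hfun : ℕ → ℤ := fun n => ((N : ℚ) * PowerSeries.coeff n G).num with hfundef
  set H : PowerSeries ℤ := PowerSeries.mk hfun with hHdef
  have hH : ∀ n, ((PowerSeries.coeff n H : ℤ) : ℚ) = (N : ℚ) * PowerSeries.coeff n G := by
    intro n
    rw [hHdef, PowerSeries.coeff_mk, hfundef]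
    exact num_cast_of_mem_IntS (hNG n)
  have hfinal : (Q₁ : PowerSeries ℤ) * H = PowerSeries.C ((c : ℤ) * N) := by
    ext m
    apply @Int.cast_injective ℚ _
    rw [coeff_coe_mul]
    have lhs : ((∑ j ∈ Finset.range (m + 1), Q₁.coeff j * PowerSeries.coeff (m - j) H : ℤ) : ℚ)
        = ((c : ℚ) * N) * ∑ j ∈ Finset.range (m + 1), Q.coeff j * PowerSeries.coeff (m - j) G := by
      push_cast
      rw [Finset.mul_sum]
      apply Finset.sum_congr rfl
      intro j _
      rw [hQ₁ j, hH (m - j)]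
      ring
    rw [lhs, ← coeff_coe_mul, hQG, PowerSeries.coeff_one, PowerSeries.coeff_C]
    split
    · push_cast; ring
    · push_cast; ring
  have hc1 : c = 1 := by
    by_contra hc1
    have hc2 : 2 ≤ c := by omega
    set p := c.minFac with hpdef
    have hp : p.Prime := Nat.minFac_prime (by omega)
    have hpc : p ∣ c := Nat.minFac_dvd c
    have hQ₁0 : Q₁.coeff 0 = (c : ℤ) := by
      apply @Int.cast_injective ℚ _
      rw [hQ₁ 0, hQ0, mul_one]
      push_cast
      ring
    have hpQ₁0 : (p : ℤ) ∣ Q₁.coeff 0 := by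
      rw [hQ₁0]
      exact_mod_cast Int.natCast_dvd_natCast.mpr hpc
    have hcp_lt : c / p < c := Nat.div_lt_self hcpos hp.two_le
    have hcp_pos : 0 < c / p := Nat.div_pos (Nat.le_of_dvd hcpos hpc) hp.pos
    have hnot := Nat.find_min hcex (m := c / p) (by rw [← hcdef]; exact hcp_lt)
    push_neg at hnot
    obtain ⟨j₀, hj₀⟩ := hnot hcp_pos
    have hi₀ : ¬ (p : ℤ) ∣ Q₁.coeff j₀ := by
      intro ⟨w, hw⟩
      apply hj₀
      refine ⟨w, ?_⟩
      show ((w : ℤ) : ℚ) = ((c / p : ℕ) : ℚ) * Q.coeff j₀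
      have hcpp : ((c / p : ℕ) : ℚ) * (p : ℚ) = (c : ℚ) := by
        exact_mod_cast congrArg (Nat.cast : ℕ → ℚ) (Nat.div_mul_cancel hpc)
      have hpe : (0 : ℚ) < (p : ℚ) := by exact_mod_cast hp.pos
      apply mul_left_cancel₀ (ne_of_gt hpe)
      have h1 : ((Q₁.coeff j₀ : ℤ) : ℚ) = (c : ℚ) * Q.coeff j₀ := hQ₁ j₀
      rw [hw] at h1
      push_cast at h1
      rw [h1, ← hcpp]
      ring
    have hd0 : ((c : ℤ) * N) ≠ 0 := by
      have : (0 : ℤ) < (c : ℤ) * N := by positivity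
      omega
    exact fatou_descent p hp Q₁ hpQ₁0 j₀ hi₀ ((c : ℤ) * N).natAbs _ le_rfl hd0 H hfinal
  have hQint : ∀ j, ∃ z : ℤ, (z : ℚ) = Q.coeff j := by
    intro j
    have h1 := hc j
    rw [← hcdef, hc1] at h1
    have h2 : Q.coeff j ∈ IntS := by simpa using h1
    obtain ⟨z, hz2⟩ := h2
    exact ⟨z, hz2⟩
  have hint : ∀ i < k, ∃ b : ℤ, a i = (b : ℚ) := by
    intro i hi
    obtain ⟨z, hz'⟩ := hQint (k - i)
    refine ⟨-z, ?_⟩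
    have he : Q.coeff (k - i) = -(a i) := by
      rw [hQcoeff (k - i) (by omega) (by omega)]
      congr 2
      omega
    rw [he] at hz'
    push_cast
    linarith [hz']
  refine ⟨hint, k, fun i => (a i).num, Or.inr ?_, ?_⟩
  · simpa [Rat.num_ne_zero] using ha0
  · intro n hn
    have hbi : ∀ i, i < k → (((a i).num : ℤ) : ℚ) = a i := by
      intro i hi
      obtain ⟨b, hb⟩ := hint i hi
      rw [hb]
      simp
    apply @Int.cast_injective ℚ _
    push_cast
    rw [hrec n hn]
    apply Finset.sum_congr rfl
    intro i hi
    rw [hbi i (Finset.mem_range.mp hi)]
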